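/- Let α < β be real numbers, γ > 0, and σ > 0. Let Q and E be independent real random variables where Q has CDF F_Q(y) = 0 for y < α, F_Q(y) = 1 − ((β − y)/(β − α))^{γ/2} for α ≤ y ≤ β, and F_Q(y) = 1 for y > β, and E is normally distributed with mean 0 and standard deviation σ. Then the CDF of Y = Q + E satisfies, for every real y, F_Y(y) = Φ((y − α)/σ) − ∫_0^1 v^{γ/2} · (1/s)·φ((v − m)/s) dv, where m = (β − y)/(β − α), s = σ/(β − α), Φ is the standard normal CDF, and φ is the standard normal density. -/

import Mathlib

open MeasureTheory ProbabilityTheory Set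

/-- The standard normal density `φ(u) = (2π)^{-1/2} e^{-u²/2}`. -/
noncomputable def stdNormalPDF (u : ℝ) : ℝ :=
  (Real.sqrt (2 * Real.pi))⁻¹ * Real.exp (-(u ^ 2) / 2)

/-- The standard normal CDF `Φ(t) = ∫_{-∞}^t φ(u) du`. -/
noncomputable def stdNormalCDF (t : ℝ) : ℝ :=
  ∫ u in Set.Iic t, stdNormalPDF u

lemma stmt5_gauss_eq (σ : ℝ) (hσ : 0 < σ) (x : ℝ) :
    gaussianPDFReal 0 ⟨σ ^ 2, sq_nonneg σ⟩ x = σ⁻¹ * stdNormalPDF (x / σ) := by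
  unfold gaussianPDFReal stdNormalPDF
  have h2π : (0:ℝ) ≤ 2 * Real.pi := by positivity
  show (Real.sqrt (2 * Real.pi * σ ^ 2))⁻¹ * Real.exp (-(x - 0) ^ 2 / (2 * σ ^ 2)) = _
  rw [Real.sqrt_mul h2π, Real.sqrt_sq hσ.le]
  rw [mul_inv, ← mul_assoc, mul_comm (Real.sqrt (2*Real.pi))⁻¹ σ⁻¹]
  congr 2
  rw [sub_zero, div_pow]
  ring

lemma stmt5_iic_cov (σ : ℝ) (hσ : 0 < σ) (c : ℝ) :
    ∫ e in Set.Iic c, σ⁻¹ * stdNormalPDF (e / σ) = stdNormalCDF (c / σ) := by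
  have h1 : ∀ e : ℝ, Set.indicator (Set.Iic c) (fun e => σ⁻¹ * stdNormalPDF (e / σ)) e
      = σ⁻¹ * Set.indicator (Set.Iic (c / σ)) stdNormalPDF (e / σ) := by
    intro e
    by_cases he : e ≤ c
    · rw [Set.indicator_of_mem (Set.mem_Iic.2 he) _,
        Set.indicator_of_mem (Set.mem_Iic.2 ((div_le_div_iff_of_pos_right hσ).2 he)) _]
    · rw [Set.indicator_of_notMem (fun h => he (Set.mem_Iic.1 h)) _, Set.indicator_of_notMem
        (fun h => he ((div_le_div_iff_of_pos_right hσ).1 (Set.mem_Iic.1 h))) _, mul_zero]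
  rw [← integral_indicator measurableSet_Iic]
  simp_rw [h1]
  rw [integral_const_mul,
    Measure.integral_comp_div (Set.indicator (Set.Iic (c/σ)) stdNormalPDF) σ,
    abs_of_pos hσ, smul_eq_mul, ← mul_assoc, inv_mul_cancel₀ hσ.ne', one_mul,
    integral_indicator measurableSet_Iic]
  rfl

lemma stmt5_ioc_cov (α β γ σ y : ℝ) (hab : α < β) (hσ : 0 < σ) :
    ∫ e in Set.Ioc (y - β) (y - α), ((β - y + e)/(β - α))^(γ/2) * (σ⁻¹ * stdNormalPDF (e/σ))
      = ∫ v in (0:ℝ)..1, v^(γ/2) * ((1/(σ/(β-α))) * stdNormalPDF ((v - (β-y)/(β-α))/(σ/(β-α)))) := by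
  set b := β - α with hbdef
  have hb : 0 < b := sub_pos.2 hab
  set h : ℝ → ℝ := fun e => ((β - y + e)/b)^(γ/2) * (σ⁻¹ * stdNormalPDF (e/σ)) with hh
  have key : ∀ v : ℝ, v ^ (γ/2) * ((1/(σ/b)) * stdNormalPDF ((v - (β-y)/b)/(σ/b)))
      = b * h (b*v + (y-β)) := by
    intro v
    have h1 : (β - y + (b*v + (y-β)))/b = v := by
      rw [hbdef]; field_simp [(sub_pos.2 hab).ne']; ring
    have h2 : (v - (β-y)/b)/(σ/b) = (b*v + (y-β))/σ := by
      have hbne : b ≠ 0 := hb.ne'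
      rw [div_div_eq_mul_div]
      congr 1
      rw [sub_mul, div_mul_cancel₀ _ hbne]
      ring
    have h3 : 1/(σ/b) = b * σ⁻¹ := by field_simp
    rw [hh]
    simp only [h1, h2, h3]
    ring
  rw [← intervalIntegral.integral_of_le (by linarith : y - β ≤ y - α)]
  have step : ∫ v in (0:ℝ)..1, v^(γ/2) * ((1/(σ/b)) * stdNormalPDF ((v - (β-y)/b)/(σ/b)))
      = ∫ v in (0:ℝ)..1, b * h (b*v + (y-β)) := by
    simp_rw [key]
  rw [step, intervalIntegral.integral_const_mul,
    intervalIntegral.integral_comp_mul_add h hb.ne' (y-β)]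
  rw [smul_eq_mul, ← mul_assoc, mul_inv_cancel₀ hb.ne', one_mul]
  congr 1 <;> ring

/-- If `Q` has the concave quadratic distribution with parameters
`α < β`, `γ > 0`, and `E` is an independent normal with mean `0` and standard deviation
`σ > 0`, then the CDF of `Y = Q + E` is
`F_Y(y) = Φ((y−α)/σ) − ∫_0^1 v^{γ/2}·(1/s)·φ((v−m)/s) dv`
with `m = (β−y)/(β−α)` and `s = σ/(β−α)`. -/
theorem stmt5 (α β γ σ : ℝ) (hab : α < β) (hγ : 0 < γ) (hσ : 0 < σ)
    {Ω : Type*} [MeasurableSpace Ω] (P : MeasureTheory.Measure Ω) [IsProbabilityMeasure P]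
    (Q E : Ω → ℝ) (hQm : Measurable Q) (hEm : Measurable E)
    (hindep : IndepFun Q E P)
    (hQ : ∀ y : ℝ, (P {ω | Q ω ≤ y}).toReal =
      if y < α then 0 else if y ≤ β then 1 - ((β - y) / (β - α)) ^ (γ / 2) else 1)
    (hE : P.map E = gaussianReal 0 ⟨σ ^ 2, sq_nonneg σ⟩) :
    ∀ y : ℝ,
      (P {ω | Q ω + E ω ≤ y}).toReal =
        stdNormalCDF ((y - α) / σ) -
          ∫ v in (0 : ℝ)..1,
            v ^ (γ / 2) *
              ((1 / (σ / (β - α))) *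
                stdNormalPDF ((v - (β - y) / (β - α)) / (σ / (β - α)))) := by
  intro y
  have hb : (0:ℝ) < β - α := sub_pos.2 hab
  set v : NNReal := ⟨σ ^ 2, sq_nonneg σ⟩ with hvdef
  have hv : v ≠ 0 := by
    intro h
    have : ((v : NNReal) : ℝ) = 0 := by rw [h]; simp
    exact (pow_ne_zero 2 hσ.ne') this
  -- the CDF of Q
  set F : ℝ → ℝ := fun t => if t < α then 0 else if t ≤ β then 1 - ((β - t) / (β - α)) ^ (γ / 2) else 1
    with hFdef
  have hF01 : ∀ t, 0 ≤ F t ∧ F t ≤ 1 := by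
    intro t
    rw [hFdef]
    by_cases h1 : t < α
    · simp [h1]
    · by_cases h2 : t ≤ β
      · simp only [h1, if_false, h2, if_true]
        have hnum : 0 ≤ (β - t) / (β - α) := div_nonneg (by linarith) hb.le
        have hle : (β - t) / (β - α) ≤ 1 := by
          rw [div_le_one hb]; push_neg at h1; linarith
        constructor
        · have := Real.rpow_le_one hnum hle (by positivity : (0:ℝ) ≤ γ / 2)
          linarith
        · have := Real.rpow_nonneg hnum (γ / 2)
          linarith
      · simp [h1, h2]
  have hFmeas : Measurable F := by
    apply Measurable.ite (by exact measurableSet_Iio)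
    · exact measurable_const
    · apply Measurable.ite (by exact measurableSet_Iic)
      · have hc : Continuous fun t : ℝ => 1 - ((β - t) / (β - α)) ^ (γ / 2) :=
          continuous_const.sub (Continuous.rpow_const (by continuity)
            (fun x => Or.inr (by positivity)))
        exact hc.measurable
      · exact measurable_const
  -- density of E
  set g : ℝ → ℝ := gaussianPDFReal 0 v with hgdef
  have hgmeas : Measurable g := measurable_gaussianPDFReal 0 v
  have hgnn : ∀ x, 0 ≤ g x := gaussianPDFReal_nonneg 0 v
  have hgint : Integrable g := integrable_gaussianPDFReal 0 v
  -- Step 1: express the probability as a lintegral against the Gaussian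
  have hstep1 : P {ω | Q ω + E ω ≤ y}
      = ∫⁻ e, ENNReal.ofReal (F (y - e)) ∂(gaussianReal 0 v) := by
    have hs : MeasurableSet {p : ℝ × ℝ | p.1 + p.2 ≤ y} :=
      measurableSet_le (measurable_fst.add measurable_snd) measurable_const
    have hmap : P.map (fun ω => (Q ω, E ω)) = (P.map Q).prod (P.map E) :=
      (ProbabilityTheory.indepFun_iff_map_prod_eq_prod_map_map hQm.aemeasurable
        hEm.aemeasurable).1 hindep
    have h1 : P {ω | Q ω + E ω ≤ y}
        = (P.map (fun ω => (Q ω, E ω))) {p : ℝ × ℝ | p.1 + p.2 ≤ y} := by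
      rw [Measure.map_apply (hQm.prodMk hEm) hs]
      rfl
    rw [h1, hmap, hE, Measure.prod_apply_symm hs]
    congr 1
    ext e
    have h2 : (fun q => (q, e)) ⁻¹' {p : ℝ × ℝ | p.1 + p.2 ≤ y} = Set.Iic (y - e) := by
      ext q; simp [le_sub_iff_add_le]
    rw [h2, Measure.map_apply hQm measurableSet_Iic]
    have h3 : Q ⁻¹' Set.Iic (y - e) = {ω | Q ω ≤ y - e} := rfl
    rw [h3, ← ENNReal.ofReal_toReal (measure_ne_top P _), hQ (y - e)]
  -- Step 2: move to a Lebesgue integral against the density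
  have hstep2 : ∫⁻ e, ENNReal.ofReal (F (y - e)) ∂(gaussianReal 0 v)
      = ∫⁻ e, ENNReal.ofReal (F (y - e) * g e) := by
    have hFym : Measurable fun e : ℝ => ENNReal.ofReal (F (y - e)) :=
      Measurable.ennreal_ofReal (hFmeas.comp (measurable_const.sub measurable_id))
    rw [gaussianReal_of_var_ne_zero 0 hv,
      lintegral_withDensity_eq_lintegral_mul _ (measurable_gaussianPDF 0 v) hFym]
    congr 1
    ext e
    simp only [Pi.mul_apply, gaussianPDF]
    rw [← ENNReal.ofReal_mul (hgnn e), mul_comm]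
  -- pointwise decomposition
  set h : ℝ → ℝ := fun e => ((β - y + e)/(β - α))^(γ/2) * g e with hhdef
  have hdecomp : ∀ e : ℝ, F (y - e) * g e
      = Set.indicator (Set.Iic (y - α)) g e
        - Set.indicator (Set.Ioc (y - β) (y - α)) h e := by
    intro e
    by_cases he1 : e ≤ y - α
    · rw [Set.indicator_of_mem (Set.mem_Iic.2 he1) _]
      by_cases he2 : y - β < e
      · rw [Set.indicator_of_mem (Set.mem_Ioc.2 ⟨he2, he1⟩) _, hFdef, hhdef]
        have hc1 : ¬ (y - e < α) := by push_neg; linarith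
        have hc2 : y - e ≤ β := by linarith
        simp only [hc1, if_false, hc2, if_true]
        have : β - (y - e) = β - y + e := by ring
        rw [this]
        ring
      · rw [Set.indicator_of_notMem (fun hm => he2 (Set.mem_Ioc.1 hm).1) _]
        have hc1 : ¬ (y - e < α) := by push_neg; linarith
        push_neg at he2
        have hF1 : F (y - e) = 1 := by
          rw [hFdef]
          simp only
          by_cases hc2 : y - e ≤ β
          · have heq : β - (y - e) = 0 := by
              have : y - e = β := le_antisymm hc2 (by linarith)
              rw [this, sub_self]
            rw [if_neg hc1, if_pos hc2, heq, zero_div,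
              Real.zero_rpow (by positivity : γ / 2 ≠ 0), sub_zero]
          · rw [if_neg hc1, if_neg hc2]
        rw [hF1, one_mul]
        ring
    · rw [Set.indicator_of_notMem (fun hm => he1 (Set.mem_Iic.1 hm)) _,
        Set.indicator_of_notMem (fun hm => he1 (Set.mem_Ioc.1 hm).2) _, hFdef]
      have hc1 : y - e < α := by linarith
      simp [hc1]
  -- integrability facts
  have hhmeas : Measurable h := by
    have hc : Continuous fun e : ℝ => ((β - y + e) / (β - α)) ^ (γ / 2) :=
      Continuous.rpow_const (by continuity) (fun x => Or.inr (by positivity))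
    exact hc.measurable.mul hgmeas
  have hAint : Integrable (Set.indicator (Set.Iic (y - α)) g) :=
    hgint.indicator measurableSet_Iic
  have hBint : Integrable (Set.indicator (Set.Ioc (y - β) (y - α)) h) := by
    refine Integrable.mono hgint
      ((hhmeas.indicator measurableSet_Ioc).aestronglyMeasurable) (ae_of_all _ ?_)
    intro e
    rw [Real.norm_eq_abs, Real.norm_eq_abs]
    by_cases hm : e ∈ Set.Ioc (y - β) (y - α)
    · rw [Set.indicator_of_mem hm]
      obtain ⟨hm1, hm2⟩ := Set.mem_Ioc.1 hm
      have hw0 : 0 ≤ (β - y + e)/(β - α) := div_nonneg (by linarith) hb.le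
      have hw1 : (β - y + e)/(β - α) ≤ 1 := by rw [div_le_one hb]; linarith
      have hr0 : 0 ≤ ((β - y + e)/(β - α))^(γ/2) := Real.rpow_nonneg hw0 _
      have hr1 : ((β - y + e)/(β - α))^(γ/2) ≤ 1 :=
        Real.rpow_le_one hw0 hw1 (by positivity)
      rw [hhdef]
      simp only
      rw [abs_of_nonneg (mul_nonneg hr0 (hgnn e)), abs_of_nonneg (hgnn e)]
      calc ((β - y + e)/(β - α))^(γ/2) * g e ≤ 1 * g e :=
            mul_le_mul_of_nonneg_right hr1 (hgnn e)
        _ = g e := one_mul _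
    · rw [Set.indicator_of_notMem hm]
      simp only [abs_zero]
      exact abs_nonneg _
  have hFgint : Integrable (fun e => F (y - e) * g e) := by
    refine (hAint.sub hBint).congr (ae_of_all _ fun e => ?_)
    simp only [Pi.sub_apply]
    exact (hdecomp e).symm
  -- Step 3: back to a Bochner integral
  have hstep3 : ∫⁻ e, ENNReal.ofReal (F (y - e) * g e)
      = ENNReal.ofReal (∫ e, F (y - e) * g e) := by
    rw [ofReal_integral_eq_lintegral_ofReal hFgint
      (ae_of_all _ fun e => mul_nonneg (hF01 (y - e)).1 (hgnn e))]
  -- compute the Bochner integral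
  have hsplit : ∫ e, F (y - e) * g e
      = (∫ e in Set.Iic (y - α), g e) - ∫ e in Set.Ioc (y - β) (y - α), h e := by
    rw [← integral_indicator measurableSet_Iic, ← integral_indicator measurableSet_Ioc,
      ← integral_sub hAint hBint]
    exact integral_congr_ae (ae_of_all _ fun e => hdecomp e)
  have hgeq : ∀ x : ℝ, g x = σ⁻¹ * stdNormalPDF (x / σ) := fun x => stmt5_gauss_eq σ hσ x
  have hfirst : ∫ e in Set.Iic (y - α), g e = stdNormalCDF ((y - α) / σ) := by
    simp_rw [hgeq]
    exact stmt5_iic_cov σ hσ (y - α)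
  have hsecond : ∫ e in Set.Ioc (y - β) (y - α), h e
      = ∫ v in (0 : ℝ)..1, v ^ (γ / 2) * ((1 / (σ / (β - α)))
          * stdNormalPDF ((v - (β - y) / (β - α)) / (σ / (β - α)))) := by
    rw [hhdef]
    simp_rw [hgeq]
    exact stmt5_ioc_cov α β γ σ y hab hσ
  -- put everything together
  rw [hstep1, hstep2, hstep3,
    ENNReal.toReal_ofReal (integral_nonneg fun e => mul_nonneg (hF01 _).1 (hgnn e)),
    hsplit, hfirst, hsecond]
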